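/- Let G be connected with modulator to cluster graph U, and let P be a shortest path in G containing a vertex of U with ecc_G(P) = 1. Then for every vertex u of G, min{d_G(u, L), d_G(u, R_1) + 1} ≤ 2, where L = V(P) ∩ U and R_1 = {u ∈ U : d_G(u, V(P)) = 1}. -/

import Mathlib

open SimpleGraph

/-- `U` is a modulator to cluster graph: every connected component of `G - U` is a clique. -/
def IsClusterModulator {V : Type*} (G : SimpleGraph V) (U : Set V) : Prop :=
  ∀ u v : ↥Uᶜ, (G.induce Uᶜ).Reachable u v → u ≠ v → (G.induce Uᶜ).Adj u v

/-- distance from a vertex to a set of vertices -/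
noncomputable def dset {V : Type*} (G : SimpleGraph V) (u : V) (S : Set V) : ℕ∞ :=
  ⨅ s ∈ S, G.edist u s

/-- eccentricity of a set of vertices -/
noncomputable def eccSet {V : Type*} (G : SimpleGraph V) (S : Set V) : ℕ∞ :=
  ⨆ u, dset G u S


lemma dset_le_edist {V : Type*} {G : SimpleGraph V} {u s : V} {S : Set V} (hs : s ∈ S) :
    dset G u S ≤ G.edist u s := by
  unfold dset; exact iInf₂_le s hs

lemma dset_attained {V : Type*} [Fintype V] {G : SimpleGraph V} (u : V) {S : Set V}
    (hS : S.Nonempty) : ∃ s ∈ S, dset G u S = G.edist u s := by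
  have h1 : dset G u S = sInf ((fun s => G.edist u s) '' S) := by
    unfold dset; rw [sInf_image]
  have h2 : sInf ((fun s => G.edist u s) '' S) ∈ ((fun s => G.edist u s) '' S) :=
    Set.Nonempty.csInf_mem (hS.image _) ((S.toFinite).image _)
  obtain ⟨s, hs, he⟩ := h2
  exact ⟨s, hs, by rw [h1, ← he]⟩

lemma firstU {V : Type*} {G : SimpleGraph V} {U : Set V} :
    ∀ {x y : V} (W : G.Walk x y) (hx : x ∈ Uᶜ) (_ : y ∈ U),
    ∃ (r : ↥Uᶜ) (q : V), q ∈ U ∧ q ∈ W.support ∧ G.Adj r q ∧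
      (G.induce Uᶜ).Reachable ⟨x, hx⟩ r
  | x, _, Walk.nil, hx, hy => absurd hy hx
  | x, y, Walk.cons (v := c) h w, hx, hy => by
    by_cases hc : c ∈ U
    · exact ⟨⟨x, hx⟩, c, hc, by simp [Walk.support_cons], h, Reachable.refl _⟩
    · obtain ⟨r, q, hq, hqs, hadj, hreach⟩ := firstU w hc hy
      refine ⟨r, q, hq, by simp [Walk.support_cons, hqs], hadj, Reachable.trans ?_ hreach⟩
      exact SimpleGraph.Adj.reachable (by simp [h])

/-- If `P` is a shortest path containing a vertex of `U` with `ecc_G(P) = 1`, then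
for every vertex `u`, `min {d_G(u,L), d_G(u,R₁)+1} ≤ 2` where `L = V(P) ∩ U` and
`R₁ = {u ∈ U : d_G(u,V(P)) = 1}`. -/
theorem stmt8 {V : Type*} [Fintype V] (G : SimpleGraph V) (hG : G.Connected)
    (U : Set V) (hU : IsClusterModulator G U)
    {a b : V} (P : G.Walk a b) (hP : P.IsPath) (hs : P.length = G.dist a b)
    (hPU : ∃ u ∈ U, u ∈ P.support)
    (hecc : eccSet G {x | x ∈ P.support} = 1) :
    ∀ u : V,
      min (dset G u ({x | x ∈ P.support} ∩ U))
        (dset G u {w | w ∈ U ∧ dset G w {x | x ∈ P.support} = 1} + 1) ≤ 2 := by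
  classical
  intro u
  set S : Set V := {x | x ∈ P.support} with hSdef
  obtain ⟨w, hwU, hwS⟩ := hPU
  have hwS' : w ∈ S := hwS
  have hSne : S.Nonempty := ⟨w, hwS'⟩
  have hd1 : dset G u S ≤ 1 := by
    rw [← hecc]; exact le_iSup (fun v => dset G v S) u
  by_cases huU : u ∈ U
  · by_cases huS : u ∈ S
    · refine le_trans (min_le_left _ _) (le_trans (dset_le_edist ⟨huS, huU⟩) ?_)
      simp [SimpleGraph.edist_self]
    · have hne : dset G u S ≠ 0 := by
        intro h0
        obtain ⟨s, hs, he⟩ := dset_attained u hSne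
        rw [he] at h0
        exact huS ((SimpleGraph.edist_eq_zero_iff (G:=G)).mp h0 ▸ hs)
      have h1 : dset G u S = 1 := le_antisymm hd1 (ENat.one_le_iff_ne_zero.mpr hne)
      refine le_trans (min_le_right _ _) ?_
      have h0 : dset G u {w | w ∈ U ∧ dset G w S = 1} ≤ 0 := by
        refine le_trans (dset_le_edist ⟨huU, h1⟩) ?_
        simp [SimpleGraph.edist_self]
      calc dset G u {w | w ∈ U ∧ dset G w S = 1} + 1 ≤ 0 + 1 := by
            exact add_le_add_left h0 1
        _ ≤ 2 := by norm_num
  · obtain ⟨p, hpS, hpe⟩ := dset_attained u hSne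
    have hup : G.edist u p ≤ 1 := hpe ▸ hd1
    by_cases hpU : p ∈ U
    · refine le_trans (min_le_left _ _) (le_trans (dset_le_edist ⟨hpS, hpU⟩) ?_)
      exact le_trans hup (by norm_num)
    · have hW : ∃ (Wk : G.Walk p w), ∀ x ∈ Wk.support, x ∈ P.support := by
        refine ⟨(P.takeUntil p hpS).reverse.append (P.takeUntil w hwS), fun x hx => ?_⟩
        rw [Walk.support_append] at hx
        rcases List.mem_append.mp hx with h | h
        · rw [Walk.support_reverse] at h
          exact Walk.support_takeUntil_subset P hpS (List.mem_reverse.mp h)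
        · exact Walk.support_takeUntil_subset P hwS (List.mem_of_mem_tail h)
      obtain ⟨Wk, hWsub⟩ := hW
      obtain ⟨r, q, hqU, hqs, hadj, hreach⟩ := firstU Wk hpU hwU
      have hupR : (G.induce Uᶜ).Reachable ⟨u, huU⟩ ⟨p, hpU⟩ := by
        rcases eq_or_ne (G.edist u p) 0 with h0 | h0
        · have : u = p := (SimpleGraph.edist_eq_zero_iff (G:=G)).mp h0
          subst this; exact Reachable.refl _
        · have h1 : G.edist u p = 1 := le_antisymm hup (ENat.one_le_iff_ne_zero.mpr h0)
          have hadj' : G.Adj u p := (SimpleGraph.edist_eq_one_iff_adj (G:=G)).mp h1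
          exact Adj.reachable (by simp [hadj'])
      have hur : (G.induce Uᶜ).Reachable ⟨u, huU⟩ r := hupR.trans hreach
      have hurG : G.edist u (r : V) ≤ 1 := by
        by_cases h : (⟨u, huU⟩ : ↥Uᶜ) = r
        · have : u = (r : V) := congrArg Subtype.val h
          rw [← this, SimpleGraph.edist_self]; norm_num
        · have hadj2 := hU _ _ hur h
          have : G.Adj u (r : V) := by simpa using hadj2
          exact le_of_eq ((SimpleGraph.edist_eq_one_iff_adj (G:=G)).mpr this)
      have huq : G.edist u q ≤ 2 := by
        calc G.edist u q ≤ G.edist u (r : V) + G.edist (r : V) q := G.edist_triangle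
          _ ≤ 1 + 1 := add_le_add hurG (le_of_eq ((SimpleGraph.edist_eq_one_iff_adj (G:=G)).mpr hadj))
          _ = 2 := by norm_num
      exact le_trans (min_le_left _ _) (le_trans (dset_le_edist ⟨hWsub q hqs, hqU⟩) huq)
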